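/- Let k ≥ 1, let J be a finite index set, let Q̂ and W_j (j ∈ J) be real symmetric (k+1)×(k+1) matrices, and let W⁰ be the (k+1)×(k+1) matrix whose only nonzero entry is a 1 in position (k+1, k+1). Let Ŷ* be a symmetric positive semidefinite (k+1)×(k+1) matrix with ⟨W_j, Ŷ*⟩ ≤ 0 for all j ∈ J and ⟨W⁰, Ŷ*⟩ = 1 (exact primal feasibility). Let ε > 0, let λ : J → ℝ with λ_j ≤ 0 for all j, and let ν ∈ ℝ satisfy Q̂ + Σ_{j∈J} λ_j W_j − ν W⁰ ⪯ ε·I (ε-approximate dual feasibility, I the identity). Then ⟨Q̂, Ŷ*⟩ ≤ ε · trace(Ŷ*) + ν. (This is the second inequality of the proposition on valid bounds from inexact SDP solutions: combined with trace(Ŷ*) ≤ 1 + t_*² it yields Φ̄(𝓕) ≤ ε(t_*² + 1) + ν, a valid upper bound on the DNN bound computable from any approximate dual solution.) -/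

import Mathlib

open Matrix

lemma trace_nonneg_psd {n : Type*} [Fintype n] [DecidableEq n]
    {M : Matrix n n ℝ} (hM : M.PosSemidef) : 0 ≤ M.trace := by
  rw [Matrix.trace]
  apply Finset.sum_nonneg
  intro i _
  have := hM.diag_nonneg (i := i)
  simpa [Finset.sum_eq_single i, Pi.single_apply] using this

open scoped MatrixOrder in
lemma trace_mul_nonneg {n : Type*} [Fintype n] [DecidableEq n]
    {A B : Matrix n n ℝ} (hA : A.PosSemidef) (hB : B.PosSemidef) :
    0 ≤ (A * B).trace := by
  have hS : CFC.sqrt A * CFC.sqrt A = A := CFC.sqrt_mul_sqrt_self A hA.nonneg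
  have hSh : (CFC.sqrt A).conjTranspose = CFC.sqrt A := (CFC.sqrt_nonneg A).posSemidef.1
  have h1 : PosSemidef ((CFC.sqrt A)ᴴ * B * CFC.sqrt A) := hB.conjTranspose_mul_mul_same _
  rw [hSh] at h1
  calc (0:ℝ) ≤ (CFC.sqrt A * B * CFC.sqrt A).trace := trace_nonneg_psd h1
  _ = (CFC.sqrt A * CFC.sqrt A * B).trace := by rw [Matrix.trace_mul_cycle]
  _ = (A * B).trace := by rw [hS]

noncomputable section

/-- Frobenius (trace) inner product of real matrices. -/
def frob {ι : Type} [Fintype ι] (A B : Matrix ι ι ℝ) : ℝ := (Aᵀ * B).trace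

/-- second inequality for valid bounds from inexact SDP solutions: an exactly
primal feasible `Ŷ*` and an `ε`-approximately dual feasible `(λ, ν)` satisfy
`⟨Q̂, Ŷ*⟩ ≤ ε·trace(Ŷ*) + ν`. -/
theorem valid_bound_from_inexact_dual (k : ℕ) (hk : 1 ≤ k)
    (J : Type) [Fintype J]
    (Qh : Matrix (Fin (k + 1)) (Fin (k + 1)) ℝ) (hQh : Qh.IsSymm)
    (W : J → Matrix (Fin (k + 1)) (Fin (k + 1)) ℝ) (hW : ∀ j, (W j).IsSymm)
    (Yh : Matrix (Fin (k + 1)) (Fin (k + 1)) ℝ) (hYpsd : Yh.PosSemidef)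
    (hWY : ∀ j, frob (W j) Yh ≤ 0)
    (hYcorner : frob (Matrix.single (Fin.last k) (Fin.last k) (1 : ℝ)) Yh = 1)
    (ε : ℝ) (hε : 0 < ε)
    (lam : J → ℝ) (hlam : ∀ j, lam j ≤ 0) (ν : ℝ)
    (hdual : (ε • (1 : Matrix (Fin (k + 1)) (Fin (k + 1)) ℝ)
        - (Qh + ∑ j, lam j • W j
          - ν • Matrix.single (Fin.last k) (Fin.last k) (1 : ℝ))).PosSemidef) :
    frob Qh Yh ≤ ε * Yh.trace + ν := by
  set W0 := Matrix.single (Fin.last k) (Fin.last k) (1 : ℝ) with hW0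
  set M := ε • (1 : Matrix (Fin (k + 1)) (Fin (k + 1)) ℝ) - (Qh + ∑ j, lam j • W j - ν • W0)
    with hM
  have hMsymm : Mᵀ = M := hdual.1
  have h0 : 0 ≤ frob M Yh := by
    rw [frob, hMsymm]
    exact trace_mul_nonneg hdual hYpsd
  have hsum : 0 ≤ ∑ j, lam j * frob (W j) Yh :=
    Finset.sum_nonneg fun j _ => by nlinarith [hlam j, hWY j]
  have hexp : frob M Yh = ε * Yh.trace - (frob Qh Yh + (∑ j, lam j * frob (W j) Yh) - ν * frob W0 Yh) := by
    simp only [hM, frob, Matrix.transpose_sub, Matrix.transpose_add, Matrix.transpose_smul,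
      Matrix.transpose_sum, Matrix.transpose_one, Matrix.sub_mul, Matrix.add_mul,
      Matrix.smul_mul, Matrix.sum_mul, Matrix.one_mul, Matrix.trace_sub, Matrix.trace_add,
      Matrix.trace_smul, Matrix.trace_sum, smul_eq_mul]
  rw [hexp] at h0
  rw [hYcorner] at h0
  linarith
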